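/- Let Ω ⊂ ℂ be an integrable domain with base point z₀ and integrable bound H. Define A : ℝ₊ → ℝ₊ as the inverse function of r ↦ ∫_r^∞ H(u) du (assumed continuous, strictly decreasing, tending to 0). Then for every minimal quasihyperbolic geodesic γ from z₀ to z ∈ Ω, and every point z₁ on γ, the Euclidean length of the subarc γ(z₁, z) of γ from z₁ to z satisfies length(γ(z₁,z)) ≤ ∫_{dist_qh(z₀,z₁)}^∞ H(r) dr; equivalently dist_qh(z₀, z₁) ≤ A(length(γ(z₁,z))). -/

import Mathlib

open Metric MeasureTheory intervalIntegral

/-- Quasihyperbolic distance in a domain `Ω ⊂ ℂ`. -/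
noncomputable def qhDist (Ω : Set ℂ) (x y : ℂ) : ℝ :=
  sInf { L : ℝ | ∃ γ : ℝ → ℂ, γ 0 = x ∧ γ 1 = y ∧ (∀ t ∈ Set.Icc (0 : ℝ) 1, γ t ∈ Ω) ∧
    DifferentiableOn ℝ γ (Set.Icc 0 1) ∧
    L = ∫ t in (0 : ℝ)..1, ‖derivWithin γ (Set.Icc 0 1) t‖ / infDist (γ t) Ωᶜ }

/-- Lemma 11.4: along a minimal quasihyperbolic geodesic from the base point `z₀` to `z`,
the Euclidean length of the terminal subarc past `z₁ = γ t₁` is at most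
`∫_{dist_qh(z₀,z₁)}^∞ H(r) dr`. -/
theorem stmt_13 (Ω : Set ℂ) (hΩ : IsOpen Ω) (hΩc : Ωᶜ.Nonempty) (hconn : IsConnected Ω)
    (z₀ : ℂ) (hz₀ : z₀ ∈ Ω)
    (H : ℝ → ℝ) (hH0 : ∀ r, 0 ≤ H r) (hHint : IntegrableOn H (Set.Ioi (0 : ℝ)))
    (hdom : ∀ z ∈ Ω, infDist z Ωᶜ ≤ H (qhDist Ω z₀ z))
    (s : ℝ) (hs : 0 ≤ s) (γ : ℝ → ℂ) (hγ0 : γ 0 = z₀)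
    (hγΩ : ∀ t ∈ Set.Icc 0 s, γ t ∈ Ω)
    (hunit : ∀ t ∈ Set.Icc 0 s, ∃ v : ℂ, ‖v‖ = 1 ∧ HasDerivAt γ v t)
    (hmin : ∀ t ∈ Set.Icc 0 s,
      qhDist Ω z₀ (γ t) = ∫ u in (0 : ℝ)..t, (infDist (γ u) Ωᶜ)⁻¹) :
    ∀ t₁ ∈ Set.Icc 0 s, s - t₁ ≤ ∫ r in Set.Ioi (qhDist Ω z₀ (γ t₁)), H r := by
  intro t₁ ht₁
  obtain ⟨ht₁0, ht₁s⟩ := ht₁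
  -- clamp to [0,s]
  set c : ℝ → ℝ := fun u => min (max u 0) s with hc
  have hcmem : ∀ u, c u ∈ Set.Icc 0 s := fun u =>
    ⟨le_min (le_max_right u 0) hs, min_le_right _ _⟩
  have hceq : ∀ u ∈ Set.Icc 0 s, c u = u := by
    intro u hu
    simp only [hc, max_eq_left hu.1, min_eq_left hu.2]
  have hccont : Continuous c := (continuous_id.max continuous_const).min continuous_const
  -- continuity of γ on [0,s]
  have hγcont : ContinuousOn γ (Set.Icc 0 s) := fun t ht =>
    (hunit t ht).choose_spec.2.continuousAt.continuousWithinAt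
  -- positivity of infDist
  have hclosed : IsClosed Ωᶜ := hΩ.isClosed_compl
  have hdpos : ∀ t ∈ Set.Icc 0 s, 0 < infDist (γ t) Ωᶜ := by
    intro t ht
    exact (hclosed.notMem_iff_infDist_pos hΩc).mp (by simpa using hγΩ t ht)
  -- the density function, extended by clamping
  set ρ : ℝ → ℝ := fun u => (infDist (γ (c u)) Ωᶜ)⁻¹ with hρ
  have hρpos : ∀ u, 0 < ρ u := fun u => inv_pos.mpr (hdpos _ (hcmem u))
  have hρcont : Continuous ρ := by
    have h1 : Continuous fun u => infDist (γ (c u)) Ωᶜ :=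
      ((continuous_infDist_pt Ωᶜ).comp_continuousOn hγcont).comp_continuous hccont hcmem
    exact h1.inv₀ fun u => (hdpos _ (hcmem u)).ne'
  set G : ℝ → ℝ := fun t => ∫ u in (0 : ℝ)..t, ρ u with hGdef
  -- G agrees with qhDist along γ on [0,s]
  have hGeq : ∀ t ∈ Set.Icc 0 s, qhDist Ω z₀ (γ t) = G t := by
    intro t ht
    rw [hmin t ht, hGdef]
    refine intervalIntegral.integral_congr fun u hu => ?_
    have hu' : u ∈ Set.Icc 0 s := by
      rw [Set.uIcc_of_le ht.1] at hu
      exact ⟨hu.1, hu.2.trans ht.2⟩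
    simp [hρ, hceq u hu']
  -- derivative of G
  have hG' : ∀ x : ℝ, HasDerivAt G (ρ x) x := fun x =>
    intervalIntegral.integral_hasDerivAt_right (hρcont.intervalIntegrable 0 x)
      (hρcont.stronglyMeasurableAtFilter _ _) hρcont.continuousAt
  have hGmono : StrictMono G := strictMono_of_deriv_pos fun x => by
    rw [(hG' x).deriv]; exact hρpos x
  have hG0 : G 0 = 0 := intervalIntegral.integral_same
  have hGnn : ∀ t, 0 ≤ t → 0 ≤ G t := by
    intro t ht
    rw [← hG0]
    exact hGmono.monotone ht
  set a : ℝ := G t₁ with ha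
  set b : ℝ := G s with hb
  have hab : a ≤ b := hGmono.monotone ht₁s
  have ha0 : 0 ≤ a := hGnn t₁ ht₁0
  -- image bound
  have himsub : G '' Set.Icc t₁ s ⊆ Set.Icc a b := by
    rintro y ⟨x, hx, rfl⟩
    exact ⟨hGmono.monotone hx.1, hGmono.monotone hx.2⟩
  -- integrability of H on [0, b] hence on the image
  have hHb : IntegrableOn H (Set.Icc 0 b) := by
    rw [integrableOn_Icc_iff_integrableOn_Ioc]
    exact hHint.mono_set Set.Ioc_subset_Ioi_self
  have hHim : IntegrableOn H (G '' Set.Icc t₁ s) :=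
    hHb.mono_set (himsub.trans (Set.Icc_subset_Icc_left ha0))
  have hder : ∀ x ∈ Set.Icc t₁ s, HasDerivWithinAt G (ρ x) (Set.Icc t₁ s) x :=
    fun x _ => (hG' x).hasDerivWithinAt
  have hinj : Set.InjOn G (Set.Icc t₁ s) := hGmono.injective.injOn
  -- change of variables
  have hcov : ∫ x in G '' Set.Icc t₁ s, H x = ∫ x in Set.Icc t₁ s, |ρ x| • H (G x) :=
    MeasureTheory.integral_image_eq_integral_abs_deriv_smul measurableSet_Icc hder hinj H
  have hint2 : IntegrableOn (fun x => |ρ x| • H (G x)) (Set.Icc t₁ s) :=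
    (MeasureTheory.integrableOn_image_iff_integrableOn_abs_deriv_smul measurableSet_Icc
      hder hinj H).mp hHim
  -- pointwise lower bound
  have hpt : ∀ x ∈ Set.Icc t₁ s, (1 : ℝ) ≤ |ρ x| • H (G x) := by
    intro x hx
    have hx' : x ∈ Set.Icc 0 s := ⟨ht₁0.trans hx.1, hx.2⟩
    have hd := hdpos x hx'
    have hρx : ρ x = (infDist (γ x) Ωᶜ)⁻¹ := by simp [hρ, hceq x hx']
    have hHx : infDist (γ x) Ωᶜ ≤ H (G x) := by
      rw [← hGeq x hx']
      exact hdom (γ x) (hγΩ x hx')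
    rw [smul_eq_mul, hρx, abs_of_nonneg (inv_nonneg.mpr hd.le)]
    calc (1 : ℝ) = (infDist (γ x) Ωᶜ)⁻¹ * infDist (γ x) Ωᶜ := (inv_mul_cancel₀ hd.ne').symm
      _ ≤ (infDist (γ x) Ωᶜ)⁻¹ * H (G x) :=
        mul_le_mul_of_nonneg_left hHx (inv_nonneg.mpr hd.le)
  -- lower bound on the integral
  have hvol : (volume (Set.Icc t₁ s)).toReal = s - t₁ := by
    rw [Real.volume_Icc, ENNReal.toReal_ofReal (sub_nonneg.mpr ht₁s)]
  have hlow : s - t₁ ≤ ∫ x in Set.Icc t₁ s, |ρ x| • H (G x) := by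
    have := MeasureTheory.setIntegral_ge_of_const_le (c := 1) measurableSet_Icc
      (by rw [Real.volume_Icc]; exact ENNReal.ofReal_ne_top) hpt hint2
    rwa [smul_eq_mul, mul_one, measureReal_def, hvol] at this
  -- compare with the integral over Ioi a
  have haene : ∀ᵐ x : ℝ, x ≠ a := by
    have : (volume ({a} : Set ℝ)) = 0 := measure_singleton a
    exact (MeasureTheory.ae_iff).mpr (by simpa [Set.setOf_eq_eq_singleton'] using this)
  have hle : (G '' Set.Icc t₁ s : Set ℝ) ≤ᵐ[volume] (Set.Ioi a : Set ℝ) := by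
    filter_upwards [haene] with x hx hmem
    have := himsub hmem
    exact lt_of_le_of_ne this.1 (Ne.symm hx)
  have hup : ∫ x in G '' Set.Icc t₁ s, H x ≤ ∫ x in Set.Ioi a, H x := by
    refine MeasureTheory.setIntegral_mono_set ?_ ?_ hle
    · exact hHint.mono_set (Set.Ioi_subset_Ioi ha0)
    · exact Filter.Eventually.of_forall fun x => hH0 x
  have hfin : qhDist Ω z₀ (γ t₁) = a := hGeq t₁ ⟨ht₁0, ht₁s⟩
  rw [hfin]
  calc s - t₁ ≤ ∫ x in Set.Icc t₁ s, |ρ x| • H (G x) := hlow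
    _ = ∫ x in G '' Set.Icc t₁ s, H x := hcov.symm
    _ ≤ ∫ x in Set.Ioi a, H x := hup
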